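/- arXiv:2006.10341 — 2 statements merged into one kernel-verified Lean document; each statement's English description precedes it below -/
import Mathlib

section
/- Let λ_k = 1/k! and Y_N = ∑_{k=1}^N ε_k/k! with ε_k ∈ {-1,1}. Then any two distinct points in the support of Y_N are at distance at least 2/N!, and 2/N! > 2 R_N where R_N = ∑_{k>N} 1/k!. -/
lemma aux_int_sep (N : ℕ) (ε ε' : ℕ → ℝ) (hε : ∀ k, ε k = 1 ∨ ε k = -1)
    (hε' : ∀ k, ε' k = 1 ∨ ε' k = -1) :
    ∃ m : ℤ, (∑ k ∈ Finset.Icc 1 N, ε k / (Nat.factorial k : ℝ)) -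
      (∑ k ∈ Finset.Icc 1 N, ε' k / (Nat.factorial k : ℝ)) =
        m * (2 / (Nat.factorial N : ℝ)) := by
  classical
  choose d hd using fun k => show ∃ d : ℤ, ε k - ε' k = 2 * d by
    rcases hε k with h | h <;> rcases hε' k with h' | h'
    · exact ⟨0, by rw [h, h']; norm_num⟩
    · exact ⟨1, by rw [h, h']; norm_num⟩
    · exact ⟨-1, by rw [h, h']; push_cast; ring⟩
    · exact ⟨0, by rw [h, h']; norm_num⟩
  refine ⟨∑ k ∈ Finset.Icc 1 N, d k * (Nat.factorial N / Nat.factorial k : ℕ), ?_⟩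
  rw [← Finset.sum_sub_distrib, Int.cast_sum, Finset.sum_mul]
  apply Finset.sum_congr rfl
  intro k hk
  have hk' := (Finset.mem_Icc.mp hk).2
  have hdvd : Nat.factorial k ∣ Nat.factorial N := Nat.factorial_dvd_factorial hk'
  have h1 : ((Nat.factorial N / Nat.factorial k : ℕ) : ℝ)
      = (Nat.factorial N : ℝ) / (Nat.factorial k : ℝ) :=
    Nat.cast_div hdvd (by positivity)
  have h2 : ε k - ε' k = 2 * (d k : ℝ) := hd k
  have hkpos : (0:ℝ) < Nat.factorial k := by positivity
  have hNpos : (0:ℝ) < Nat.factorial N := by positivity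
  rw [Int.cast_mul, Int.cast_natCast, h1, div_sub_div_same, h2]
  field_simp

lemma fac_ge (N : ℕ) : ∀ k : ℕ,
    Nat.factorial (N+1) * (N+2)^k ≤ Nat.factorial (N+1+k) := by
  intro k
  induction k with
  | zero => simp
  | succ k ih =>
    have h : N+1+(k+1) = (N+1+k)+1 := by ring
    rw [h, Nat.factorial_succ, pow_succ]
    calc Nat.factorial (N+1) * ((N+2)^k * (N+2))
        = (N+2) * (Nat.factorial (N+1) * (N+2)^k) := by ring
      _ ≤ (N+2) * Nat.factorial (N+1+k) := Nat.mul_le_mul_left _ ih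
      _ ≤ (N+1+k+1) * Nat.factorial (N+1+k) :=
          Nat.mul_le_mul_right _ (by omega)

/-- For `λ_k = 1/k!` and `Y_N = ∑_{k=1}^N ε_k/k!`, any two distinct points of the
support of `Y_N` are at distance at least `2/N!`, and `2/N! > 2 R_N` with
`R_N = ∑_{k>N} 1/k!`. -/
theorem support_separation_factorial (N : ℕ) (hN : 1 ≤ N) :
    (∀ x ∈ {y : ℝ | ∃ ε : ℕ → ℝ, (∀ k, ε k = 1 ∨ ε k = -1) ∧
        y = ∑ k ∈ Finset.Icc 1 N, ε k / (Nat.factorial k : ℝ)},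
     ∀ x' ∈ {y : ℝ | ∃ ε : ℕ → ℝ, (∀ k, ε k = 1 ∨ ε k = -1) ∧
        y = ∑ k ∈ Finset.Icc 1 N, ε k / (Nat.factorial k : ℝ)},
      x ≠ x' → 2 / (Nat.factorial N : ℝ) ≤ |x - x'|) ∧
    2 * (∑' k : ℕ, 1 / (Nat.factorial (N + 1 + k) : ℝ)) < 2 / (Nat.factorial N : ℝ) := by
  have hNpos : (0:ℝ) < Nat.factorial N := by positivity
  constructor
  · rintro x ⟨ε, hε, rfl⟩ x' ⟨ε', hε', rfl⟩ hne
    obtain ⟨m, hm⟩ := aux_int_sep N ε ε' hε hε'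
    have hm0 : m ≠ 0 := by
      rintro rfl
      apply hne
      simpa using sub_eq_zero.mp (by simpa using hm)
    have h1 : (1:ℝ) ≤ |(m:ℝ)| := by
      have : (1:ℤ) ≤ |m| := Int.one_le_abs hm0
      calc (1:ℝ) ≤ (|m| : ℤ) := by exact_mod_cast this
        _ = |(m:ℝ)| := by push_cast; ring
    rw [hm, abs_mul, abs_of_pos (by positivity : (0:ℝ) < 2 / (Nat.factorial N : ℝ))]
    have hpos : (0:ℝ) < 2 / (Nat.factorial N : ℝ) := by positivity
    nlinarith [mul_le_mul_of_nonneg_right h1 hpos.le]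
  · -- tail bound
    set r : ℝ := 1 / (N+2) with hr
    have hr0 : 0 ≤ r := by positivity
    have hr1 : r < 1 := by
      rw [hr, div_lt_one (by positivity)]
      have : (0:ℝ) ≤ N := Nat.cast_nonneg N
      linarith
    have hgeom : Summable (fun k : ℕ => (1 / (Nat.factorial (N+1) : ℝ)) * r ^ k) :=
      (summable_geometric_of_lt_one hr0 hr1).mul_left _
    have hbound : ∀ k : ℕ, 1 / (Nat.factorial (N+1+k) : ℝ)
        ≤ (1 / (Nat.factorial (N+1) : ℝ)) * r ^ k := by
      intro k
      have h := fac_ge N k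
      have h' : ((Nat.factorial (N+1) * (N+2)^k : ℕ) : ℝ) ≤ (Nat.factorial (N+1+k) : ℝ) := by
        exact_mod_cast h
      push_cast at h'
      rw [hr, div_pow, one_pow, div_mul_div_comm, one_mul]
      apply one_div_le_one_div_of_le
      · positivity
      · exact_mod_cast h'
    have hsum : Summable (fun k : ℕ => 1 / (Nat.factorial (N+1+k) : ℝ)) :=
      Summable.of_nonneg_of_le (fun k => by positivity) hbound hgeom
    have htsum : (∑' k : ℕ, 1 / (Nat.factorial (N+1+k) : ℝ))
        ≤ (1 / (Nat.factorial (N+1) : ℝ)) * (1 / (1 - r)) := by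
      calc (∑' k : ℕ, 1 / (Nat.factorial (N+1+k) : ℝ))
          ≤ ∑' k : ℕ, (1 / (Nat.factorial (N+1) : ℝ)) * r ^ k :=
            Summable.tsum_le_tsum hbound hsum hgeom
        _ = (1 / (Nat.factorial (N+1) : ℝ)) * (1 / (1 - r)) := by
            rw [tsum_mul_left, tsum_geometric_of_lt_one hr0 hr1]
            simp [one_div]
    have hfin : (1 / (Nat.factorial (N+1) : ℝ)) * (1 / (1 - r)) < 1 / (Nat.factorial N : ℝ) := by
      have hfacsucc : (Nat.factorial (N+1) : ℝ) = (N+1) * Nat.factorial N := by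
        rw [Nat.factorial_succ]; push_cast; ring
      have h1r : 1 - r = (N+1) / (N+2) := by
        rw [hr]; field_simp; ring
      rw [hfacsucc, h1r]
      have hN1 : (1:ℝ) ≤ N := by exact_mod_cast hN
      have heq : 1 / (((N:ℝ)+1) * Nat.factorial N) * (1 / (((N:ℝ)+1) / ((N:ℝ)+2)))
          = ((N:ℝ)+2) / (((N:ℝ)+1)^2 * Nat.factorial N) := by
        rw [eq_div_iff (by positivity)]
        field_simp
      rw [heq, div_lt_div_iff₀ (by positivity) hNpos]
      nlinarith [hNpos, hN1]
    have h2N : 2 / (Nat.factorial N : ℝ) = 2 * (1 / (Nat.factorial N : ℝ)) := by ring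
    linarith
end

section
/- Let (ε_k) and (ε'_k) be two independent sequences of i.i.d. Rademacher variables, Y_N = ∑_{k=1}^N ε_k/k! and Y'_N = ∑_{k=1}^N ε'_k/k!. Then P(|Y_N - Y'_N| < 2 R_N) = 2^{-N}, where R_N = ∑_{k>N} 1/k!. -/
open MeasureTheory ProbabilityTheory


open MeasureTheory ProbabilityTheory

lemma fact_ge_two_pow (m j : ℕ) : 2 ^ j ≤ Nat.factorial (m + 1 + j) := by
  induction j with
  | zero => simpa using Nat.one_le_iff_ne_zero.mpr (Nat.factorial_ne_zero _)
  | succ j ih =>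
      have : m + 1 + (j + 1) = (m + 1 + j) + 1 := by ring
      rw [this, Nat.factorial_succ, pow_succ]
      have h2 : 2 ≤ m + 1 + j + 1 := by omega
      calc 2 ^ j * 2 ≤ Nat.factorial (m + 1 + j) * 2 := by
            exact Nat.mul_le_mul_right _ ih
        _ ≤ (m + 1 + j + 1) * Nat.factorial (m + 1 + j) := by
            rw [mul_comm]; exact Nat.mul_le_mul_right _ h2

lemma summable_tail (m : ℕ) : Summable (fun j : ℕ => 1 / (Nat.factorial (m + 1 + j) : ℝ)) := by
  apply Summable.of_nonneg_of_le (fun j => by positivity)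
    (fun j => ?_) (summable_geometric_two)
  calc (1:ℝ) / (Nat.factorial (m + 1 + j) : ℝ) ≤ 1 / 2 ^ j :=
        one_div_le_one_div_of_le (by positivity) (by exact_mod_cast fact_ge_two_pow m j)
    _ = (1/2 : ℝ) ^ j := (one_div_pow 2 j).symm

lemma tail_pos (m : ℕ) : 0 < ∑' j : ℕ, 1 / (Nat.factorial (m + 1 + j) : ℝ) :=
  Summable.tsum_pos (summable_tail m) (fun j => by positivity) 0 (by positivity)

lemma fact_mul_two_pow (m j : ℕ) (hm : 1 ≤ m) :
    Nat.factorial m * 2 ^ (j + 1) ≤ Nat.factorial (m + 1 + j) := by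
  induction j with
  | zero =>
      have : m + 1 + 0 = m + 1 := rfl
      rw [this, Nat.factorial_succ, pow_one]
      rw [mul_comm]
      exact Nat.mul_le_mul_right _ (by omega)
  | succ j ih =>
      have h : m + 1 + (j + 1) = (m + 1 + j) + 1 := by ring
      rw [h, Nat.factorial_succ, pow_succ]
      calc Nat.factorial m * (2 ^ (j+1) * 2) = (Nat.factorial m * 2 ^ (j+1)) * 2 := by ring
        _ ≤ Nat.factorial (m + 1 + j) * 2 := Nat.mul_le_mul_right _ ih
        _ ≤ (m + 1 + j + 1) * Nat.factorial (m + 1 + j) := by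
            rw [mul_comm]; exact Nat.mul_le_mul_right _ (by omega)

lemma tail_le (m : ℕ) (hm : 1 ≤ m) :
    ∑' j : ℕ, 1 / (Nat.factorial (m + 1 + j) : ℝ) ≤ 1 / Nat.factorial m := by
  have h1 : ∀ j : ℕ, 1 / (Nat.factorial (m + 1 + j) : ℝ)
      ≤ (1 / Nat.factorial m) * (1/2) ^ (j+1) := by
    intro j
    calc (1:ℝ) / (Nat.factorial (m + 1 + j) : ℝ)
        ≤ 1 / ((Nat.factorial m : ℝ) * 2 ^ (j+1)) :=
          one_div_le_one_div_of_le (by positivity) (by exact_mod_cast fact_mul_two_pow m j hm)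
      _ = (1 / Nat.factorial m : ℝ) * (1/2) ^ (j+1) := by
          rw [one_div_pow, div_mul_div_comm, one_mul]
  calc ∑' j : ℕ, 1 / (Nat.factorial (m + 1 + j) : ℝ)
      ≤ ∑' j : ℕ, (1 / Nat.factorial m : ℝ) * (1/2) ^ (j+1) := by
        apply Summable.tsum_le_tsum h1 (summable_tail m)
        exact (summable_geometric_two.mul_left _).comp_injective (add_left_injective 1)
    _ = (1 / Nat.factorial m : ℝ) * ∑' j : ℕ, (1/2 : ℝ) ^ (j+1) := by
        rw [tsum_mul_left]
    _ ≤ 1 / Nat.factorial m := by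
        have h2 : ∑' j : ℕ, (1/2 : ℝ) ^ (j+1) = 1 := by
          calc ∑' j : ℕ, (1/2 : ℝ) ^ (j+1) = ∑' j : ℕ, (1/2 : ℝ) * (1/2) ^ j := by
                simp only [pow_succ']
            _ = (1/2) * ∑' j : ℕ, (1/2 : ℝ) ^ j := tsum_mul_left
            _ = 1 := by rw [tsum_geometric_two]; norm_num
        rw [h2, mul_one]

section Prob
variable {Ω : Type*} [MeasurableSpace Ω] (P : Measure Ω) [IsProbabilityMeasure P]
  (f : ℕ ⊕ ℕ → Ω → ℝ)

lemma single_prob (hmeas : ∀ i, Measurable (f i))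
    (hindep : iIndepFun f P)
    (hrad : ∀ i, P {ω | f i ω = 1} = 1 / 2 ∧ P {ω | f i ω = -1} = 1 / 2)
    (a : ℕ) :
    P {ω | f (Sum.inl a) ω = f (Sum.inr a) ω} = 1 / 2 := by
  set i := Sum.inl a with hi
  set j := (Sum.inr a : ℕ ⊕ ℕ) with hj
  have hpre1 : ∀ (i : ℕ ⊕ ℕ), f i ⁻¹' {1} = {ω | f i ω = 1} := fun i => rfl
  have hpre2 : ∀ (i : ℕ ⊕ ℕ), f i ⁻¹' {-1} = {ω | f i ω = -1} := fun i => rfl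
  have hIF : IndepFun (f i) (f j) P := hindep.indepFun (by simp [hi, hj])
  have h11 : P (f i ⁻¹' {1} ∩ f j ⁻¹' {1}) = 1/4 := by
    rw [hIF.measure_inter_preimage_eq_mul _ _ (measurableSet_singleton _)
      (measurableSet_singleton _), hpre1, hpre1, (hrad i).1, (hrad j).1]
    rw [one_div, one_div, ← ENNReal.mul_inv (Or.inr (by norm_num)) (Or.inl (by norm_num))]
    norm_num
  have hmm : P (f i ⁻¹' {-1} ∩ f j ⁻¹' {-1}) = 1/4 := by
    rw [hIF.measure_inter_preimage_eq_mul _ _ (measurableSet_singleton _)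
      (measurableSet_singleton _), hpre2, hpre2, (hrad i).2, (hrad j).2]
    rw [one_div, one_div, ← ENNReal.mul_inv (Or.inr (by norm_num)) (Or.inl (by norm_num))]
    norm_num
  have hone : ∀ (i : ℕ ⊕ ℕ), P (f i ⁻¹' {1, -1}) = 1 := by
    intro i
    have : (f i ⁻¹' {1, -1}) = f i ⁻¹' {1} ∪ f i ⁻¹' {-1} := by
      rw [← Set.preimage_union]; rfl
    rw [this, measure_union ?_ ((hmeas i) (measurableSet_singleton _))]
    · rw [hpre1, hpre2, (hrad i).1, (hrad i).2, one_div, ENNReal.inv_two_add_inv_two]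
    · rw [Set.disjoint_left]
      rintro ω h1 h2
      simp only [Set.mem_preimage, Set.mem_singleton_iff] at h1 h2
      rw [h1] at h2; norm_num at h2
  set G := (f i ⁻¹' {1, -1}) ∩ (f j ⁻¹' {1, -1}) with hG
  have hGc : P Gᶜ = 0 := by
    have hmG : ∀ (i : ℕ ⊕ ℕ), MeasurableSet (f i ⁻¹' ({1, -1} : Set ℝ)) :=
      fun i => (hmeas i) (by measurability)
    rw [hG, Set.compl_inter]
    refine le_antisymm (le_trans (measure_union_le _ _) ?_) zero_le
    rw [prob_compl_eq_one_sub (hmG i), prob_compl_eq_one_sub (hmG j), hone, hone]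
    simp
  have hsplit : {ω | f i ω = f j ω} ∩ G =
      (f i ⁻¹' {1} ∩ f j ⁻¹' {1}) ∪ (f i ⁻¹' {-1} ∩ f j ⁻¹' {-1}) := by
    ext ω
    simp only [hG, Set.mem_inter_iff, Set.mem_setOf_eq, Set.mem_preimage,
      Set.mem_insert_iff, Set.mem_singleton_iff, Set.mem_union]
    constructor
    · rintro ⟨heq, hi', _⟩
      rcases hi' with h | h
      · exact Or.inl ⟨h, by rw [← heq, h]⟩
      · exact Or.inr ⟨h, by rw [← heq, h]⟩
    · rintro (⟨h1, h2⟩ | ⟨h1, h2⟩) <;>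
        exact ⟨by rw [h1, h2], by simp [h1], by simp [h2]⟩
  calc P {ω | f i ω = f j ω} = P ({ω | f i ω = f j ω} ∩ G) :=
        (measure_inter_conull hGc).symm
    _ = P ((f i ⁻¹' {1} ∩ f j ⁻¹' {1}) ∪ (f i ⁻¹' {-1} ∩ f j ⁻¹' {-1})) := by rw [hsplit]
    _ = 1/2 := by
        rw [measure_union ?_ (((hmeas i) (measurableSet_singleton _)).inter
          ((hmeas j) (measurableSet_singleton _))), h11, hmm]
        · have h4 : (1/4 : ENNReal) = 2⁻¹/2 := by
            rw [div_eq_mul_inv 2⁻¹, ← ENNReal.mul_inv (Or.inr (by norm_num)) (Or.inl (by norm_num))]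
            norm_num
          rw [h4, ENNReal.add_halves, one_div]
        · rw [Set.disjoint_left]
          rintro ω ⟨h1, _⟩ ⟨h2, _⟩
          simp only [Set.mem_preimage, Set.mem_singleton_iff] at h1 h2
          rw [h1] at h2; norm_num at h2

lemma pair_meas_eq (hmeas : ∀ i, Measurable (f i))
    (hindep : iIndepFun f P)
    (hrad : ∀ i, P {ω | f i ω = 1} = 1 / 2 ∧ P {ω | f i ω = -1} = 1 / 2)
    (S : Finset ℕ) :
    P (⋂ k ∈ S, {ω | f (Sum.inl k) ω = f (Sum.inr k) ω}) = (1/2 : ENNReal) ^ S.card := by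
  classical
  induction S using Finset.induction_on with
  | empty => simp
  | @insert a S ha ih =>
    rw [Finset.card_insert_of_notMem ha, Finset.set_biInter_insert]
    set m : ℕ ⊕ ℕ → MeasurableSpace Ω :=
      fun i => MeasurableSpace.comap (f i) inferInstance with hm
    have h_le : ∀ i, m i ≤ ‹MeasurableSpace Ω› := fun i => (hmeas i).comap_le
    have hD : ∀ (i j : ℕ ⊕ ℕ) (m' : MeasurableSpace Ω), m i ≤ m' → m j ≤ m' →
        MeasurableSet[m'] {ω | f i ω = f j ω} := by
      intro i j m' h1 h2
      have hfi : Measurable[m'] (f i) := (measurable_iff_comap_le).mpr h1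
      have hfj : Measurable[m'] (f j) := (measurable_iff_comap_le).mpr h2
      have : {ω | f i ω = f j ω} = (fun ω => f i ω - f j ω) ⁻¹' {0} := by
        ext ω; simp [sub_eq_zero]
      rw [this]
      exact (hfi.sub hfj) (measurableSet_singleton 0)
    set T1 : Set (ℕ ⊕ ℕ) := {Sum.inl a, Sum.inr a} with hT1
    set T2 : Set (ℕ ⊕ ℕ) := (Sum.inl '' S) ∪ (Sum.inr '' S) with hT2
    have hdisj : Disjoint T1 T2 := by
      rw [Set.disjoint_left]
      rintro x hx1 hx2
      simp only [hT1, hT2, Set.mem_insert_iff, Set.mem_singleton_iff, Set.mem_union,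
        Set.mem_image, Finset.mem_coe] at hx1 hx2
      rcases hx1 with rfl | rfl <;>
        rcases hx2 with ⟨k, hk, hkeq⟩ | ⟨k, hk, hkeq⟩ <;>
          simp_all only [Sum.inl.injEq, Sum.inr.injEq, reduceCtorEq] <;> exact ha (hkeq ▸ hk)
    have hInd : Indep (⨆ i ∈ T1, m i) (⨆ i ∈ T2, m i) P :=
      indep_iSup_of_disjoint h_le hindep.iIndep hdisj
    have hm1 : MeasurableSet[⨆ i ∈ T1, m i] {ω | f (Sum.inl a) ω = f (Sum.inr a) ω} := by
      refine hD _ _ _ ?_ ?_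
      · exact le_iSup₂ (f := fun i (_ : i ∈ T1) => m i) (Sum.inl a) (by simp [hT1])
      · exact le_iSup₂ (f := fun i (_ : i ∈ T1) => m i) (Sum.inr a) (by simp [hT1])
    have hm2 : MeasurableSet[⨆ i ∈ T2, m i]
        (⋂ k ∈ S, {ω | f (Sum.inl k) ω = f (Sum.inr k) ω}) := by
      refine MeasurableSet.biInter S.countable_toSet (fun k hk => hD _ _ _ ?_ ?_)
      · exact le_iSup₂ (f := fun i (_ : i ∈ T2) => m i) (Sum.inl k)
          (by simp only [hT2]; exact Or.inl ⟨k, hk, rfl⟩)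
      · exact le_iSup₂ (f := fun i (_ : i ∈ T2) => m i) (Sum.inr k)
          (by simp only [hT2]; exact Or.inr ⟨k, hk, rfl⟩)
    rw [(Indep_iff _ _ _).mp hInd _ _ hm1 hm2, ih,
      single_prob P f hmeas hindep hrad a, pow_succ]
    ring

end Prob

lemma rad_null {Ω : Type*} [MeasurableSpace Ω] (P : Measure Ω) [IsProbabilityMeasure P]
    (f : ℕ ⊕ ℕ → Ω → ℝ) (hmeas : ∀ i, Measurable (f i))
    (hrad : ∀ i, P {ω | f i ω = 1} = 1 / 2 ∧ P {ω | f i ω = -1} = 1 / 2)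
    (i : ℕ ⊕ ℕ) : P ((f i ⁻¹' ({1, -1} : Set ℝ))ᶜ) = 0 := by
  have h1 : (f i ⁻¹' ({1, -1} : Set ℝ)) = f i ⁻¹' {1} ∪ f i ⁻¹' {-1} := by
    rw [← Set.preimage_union]; rfl
  have hone : P (f i ⁻¹' ({1, -1} : Set ℝ)) = 1 := by
    rw [h1, measure_union ?_ ((hmeas i) (measurableSet_singleton _))]
    · have e1 : f i ⁻¹' {1} = {ω | f i ω = 1} := rfl
      have e2 : f i ⁻¹' {-1} = {ω | f i ω = -1} := rfl
      rw [e1, e2, (hrad i).1, (hrad i).2, one_div, ENNReal.inv_two_add_inv_two]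
    · rw [Set.disjoint_left]
      rintro ω h1' h2'
      simp only [Set.mem_preimage, Set.mem_singleton_iff] at h1' h2'
      rw [h1'] at h2'; norm_num at h2'
  rw [prob_compl_eq_one_sub ((hmeas i) (by measurability)), hone]
  simp

set_option maxHeartbeats 1000000 in
/-- For two independent sequences of i.i.d. Rademacher variables `ε, ε'` (given as one
independent family indexed by `ℕ ⊕ ℕ`), with `Y_N = ∑_{k=1}^N ε_k/k!` and
`Y'_N = ∑_{k=1}^N ε'_k/k!`, one has `P(|Y_N - Y'_N| < 2 R_N) = 2^{-N}`
where `R_N = ∑_{k>N} 1/k!`. -/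
theorem rademacher_coincidence_probability
    {Ω : Type*} [MeasurableSpace Ω] (P : Measure Ω) [IsProbabilityMeasure P]
    (f : ℕ ⊕ ℕ → Ω → ℝ) (hmeas : ∀ i, Measurable (f i))
    (hindep : iIndepFun f P)
    (hrad : ∀ i, P {ω | f i ω = 1} = 1 / 2 ∧ P {ω | f i ω = -1} = 1 / 2)
    (N : ℕ) :
    P {ω | |(∑ k ∈ Finset.Icc 1 N, f (Sum.inl k) ω / (Nat.factorial k : ℝ)) -
            ∑ k ∈ Finset.Icc 1 N, f (Sum.inr k) ω / (Nat.factorial k : ℝ)| <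
          2 * ∑' k : ℕ, 1 / (Nat.factorial (N + 1 + k) : ℝ)} = (1 / 2) ^ N := by
  classical
  set R : ℝ := ∑' k : ℕ, 1 / (Nat.factorial (N + 1 + k) : ℝ) with hRdef
  have hRpos : 0 < R := tail_pos N
  set G : Set Ω := ⋂ k ∈ Finset.Icc 1 N,
      ((f (Sum.inl k) ⁻¹' ({1, -1} : Set ℝ)) ∩ (f (Sum.inr k) ⁻¹' ({1, -1} : Set ℝ))) with hG
  have hGc : P Gᶜ = 0 := by
    rw [hG, Set.compl_iInter₂]
    refine measure_iUnion_null fun k => measure_iUnion_null fun hk => ?_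
    rw [Set.compl_inter]
    exact measure_union_null (rad_null P f hmeas hrad _) (rad_null P f hmeas hrad _)
  have hkey : {ω | |(∑ k ∈ Finset.Icc 1 N, f (Sum.inl k) ω / (Nat.factorial k : ℝ)) -
            ∑ k ∈ Finset.Icc 1 N, f (Sum.inr k) ω / (Nat.factorial k : ℝ)| < 2 * R} ∩ G =
      (⋂ k ∈ Finset.Icc 1 N, {ω | f (Sum.inl k) ω = f (Sum.inr k) ω}) ∩ G := by
    ext ω
    simp only [Set.mem_inter_iff, Set.mem_setOf_eq]
    constructor
    · rintro ⟨hlt, hGω⟩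
      refine ⟨Set.mem_iInter₂.mpr ?_, hGω⟩
      have hval : ∀ k ∈ Finset.Icc 1 N,
          (f (Sum.inl k) ω = 1 ∨ f (Sum.inl k) ω = -1) ∧
          (f (Sum.inr k) ω = 1 ∨ f (Sum.inr k) ω = -1) := by
        intro k hk
        have h := Set.mem_iInter₂.mp hGω k hk
        obtain ⟨hl, hr⟩ := h
        simp only [Set.mem_preimage, Set.mem_insert_iff, Set.mem_singleton_iff] at hl hr
        exact ⟨hl, hr⟩
      by_contra hcon
      push_neg at hcon
      obtain ⟨k0, hk0, hne0⟩ := hcon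
      simp only [Set.mem_setOf_eq] at hne0
      have hT0ne : ((Finset.Icc 1 N).filter
          (fun k => f (Sum.inl k) ω ≠ f (Sum.inr k) ω)).Nonempty :=
        ⟨k0, Finset.mem_filter.mpr ⟨hk0, hne0⟩⟩
      obtain ⟨m, hmT0, hminle⟩ : ∃ m ∈ (Finset.Icc 1 N).filter
          (fun k => f (Sum.inl k) ω ≠ f (Sum.inr k) ω),
          ∀ k ∈ (Finset.Icc 1 N).filter
            (fun k => f (Sum.inl k) ω ≠ f (Sum.inr k) ω), m ≤ k :=
        ⟨_, Finset.min'_mem _ hT0ne, fun k hk => Finset.min'_le _ _ hk⟩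
      have hmIcc : m ∈ Finset.Icc 1 N := (Finset.mem_filter.mp hmT0).1
      have hmne : f (Sum.inl m) ω ≠ f (Sum.inr m) ω := (Finset.mem_filter.mp hmT0).2
      obtain ⟨hm1, hmN⟩ := Finset.mem_Icc.mp hmIcc
      have hmin : ∀ k ∈ Finset.Icc 1 N, k < m → f (Sum.inl k) ω = f (Sum.inr k) ω := by
        intro k hk hklt
        by_contra hne'
        exact absurd (hminle k (Finset.mem_filter.mpr ⟨hk, hne'⟩)) (not_le.mpr hklt)
      -- rewrite the difference of sums
      have hsum : (∑ k ∈ Finset.Icc 1 N, f (Sum.inl k) ω / (Nat.factorial k : ℝ)) -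
            ∑ k ∈ Finset.Icc 1 N, f (Sum.inr k) ω / (Nat.factorial k : ℝ) =
          ∑ k ∈ Finset.Icc 1 N,
            (f (Sum.inl k) ω - f (Sum.inr k) ω) / (Nat.factorial k : ℝ) := by
        rw [← Finset.sum_sub_distrib]
        exact Finset.sum_congr rfl fun k _ => div_sub_div_same _ _ _
      have hdisj : Disjoint (Finset.Icc 1 m) (Finset.Ioc m N) := by
        rw [Finset.disjoint_left]
        intro k hk1 hk2
        rw [Finset.mem_Icc] at hk1; rw [Finset.mem_Ioc] at hk2; omega
      have hsplit : ∑ k ∈ Finset.Icc 1 N,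
            (f (Sum.inl k) ω - f (Sum.inr k) ω) / (Nat.factorial k : ℝ) =
          (∑ k ∈ Finset.Icc 1 m,
            (f (Sum.inl k) ω - f (Sum.inr k) ω) / (Nat.factorial k : ℝ)) +
          ∑ k ∈ Finset.Ioc m N,
            (f (Sum.inl k) ω - f (Sum.inr k) ω) / (Nat.factorial k : ℝ) := by
        have e1 : Finset.Icc 1 N = Finset.Ioc 0 N := Finset.Icc_add_one_left_eq_Ioc 0 N
        have e2 : Finset.Icc 1 m = Finset.Ioc 0 m := Finset.Icc_add_one_left_eq_Ioc 0 m
        rw [e1, e2]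
        exact (Finset.sum_Ioc_consecutive _ (Nat.zero_le m) hmN).symm
      have h1 : ∑ k ∈ Finset.Icc 1 m,
            (f (Sum.inl k) ω - f (Sum.inr k) ω) / (Nat.factorial k : ℝ) =
          (f (Sum.inl m) ω - f (Sum.inr m) ω) / (Nat.factorial m : ℝ) := by
        refine Finset.sum_eq_single_of_mem m (Finset.mem_Icc.mpr ⟨hm1, le_rfl⟩) ?_
        intro k hk hkne
        obtain ⟨hk1, hkm⟩ := Finset.mem_Icc.mp hk
        have hklt : k < m := lt_of_le_of_ne hkm hkne
        rw [hmin k (Finset.mem_Icc.mpr ⟨hk1, le_trans hkm hmN⟩) hklt, sub_self, zero_div]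
      have habs2 : ∀ k ∈ Finset.Ioc m N,
          |(f (Sum.inl k) ω - f (Sum.inr k) ω) / (Nat.factorial k : ℝ)|
            ≤ 2 / (Nat.factorial k : ℝ) := by
        intro k hk
        obtain ⟨hmk, hkN⟩ := Finset.mem_Ioc.mp hk
        have hkIcc : k ∈ Finset.Icc 1 N := Finset.mem_Icc.mpr ⟨by omega, hkN⟩
        have hfp : (0:ℝ) < (Nat.factorial k : ℝ) := by positivity
        rw [abs_div, abs_of_pos hfp, div_le_div_iff_of_pos_right hfp]
        rcases (hval k hkIcc).1 with h | h <;> rcases (hval k hkIcc).2 with h' | h' <;>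
          rw [h, h'] <;> norm_num
      have hB : |∑ k ∈ Finset.Ioc m N,
            (f (Sum.inl k) ω - f (Sum.inr k) ω) / (Nat.factorial k : ℝ)|
          ≤ ∑ k ∈ Finset.Ioc m N, 2 / (Nat.factorial k : ℝ) :=
        le_trans (Finset.abs_sum_le_sum_abs _ _) (Finset.sum_le_sum habs2)
      have hdm : |(f (Sum.inl m) ω - f (Sum.inr m) ω)| = 2 := by
        rcases (hval m hmIcc).1 with h | h <;> rcases (hval m hmIcc).2 with h' | h'
        · exact absurd (h.trans h'.symm) hmne
        · rw [h, h']; norm_num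
        · rw [h, h']; norm_num
        · exact absurd (h.trans h'.symm) hmne
      have hfmp : (0:ℝ) < (Nat.factorial m : ℝ) := by positivity
      have hdmq : |(f (Sum.inl m) ω - f (Sum.inr m) ω) / (Nat.factorial m : ℝ)|
          = 2 / (Nat.factorial m : ℝ) := by
        rw [abs_div, abs_of_pos hfmp, hdm]
      -- the tail identity
      have hident : ∑ k ∈ Finset.Ioc m N, 1 / (Nat.factorial k : ℝ) + R =
          ∑' j : ℕ, 1 / (Nat.factorial (m + 1 + j) : ℝ) := by
        have hadd := Summable.sum_add_tsum_nat_add' (f := fun j : ℕ =>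
          1 / (Nat.factorial (m + 1 + j) : ℝ)) (k := N - m)
          ((summable_nat_add_iff (N - m)).mpr (summable_tail m))
        have hfin : ∑ k ∈ Finset.Ioc m N, 1 / (Nat.factorial k : ℝ) =
            ∑ i ∈ Finset.range (N - m), 1 / (Nat.factorial (m + 1 + i) : ℝ) := by
          rw [← Finset.Ico_add_one_add_one_eq_Ioc, Finset.sum_Ico_eq_sum_range, Nat.add_sub_add_right]
        have htail : ∑' i : ℕ, 1 / (Nat.factorial (m + 1 + (i + (N - m))) : ℝ) = R := by
          rw [hRdef]
          refine tsum_congr fun i => ?_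
          have harg : m + 1 + (i + (N - m)) = N + 1 + i := by omega
          rw [harg]
        rw [hfin, ← htail, ← hadd]
      have hle : ∑ k ∈ Finset.Ioc m N, 1 / (Nat.factorial k : ℝ) + R
          ≤ 1 / (Nat.factorial m : ℝ) := by
        rw [hident]; exact tail_le m hm1
      have htwo : ∑ k ∈ Finset.Ioc m N, 2 / (Nat.factorial k : ℝ) =
          2 * ∑ k ∈ Finset.Ioc m N, 1 / (Nat.factorial k : ℝ) := by
        rw [Finset.mul_sum]
        exact Finset.sum_congr rfl fun k _ => by rw [mul_one_div]
      -- triangle inequality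
      have htri : |(f (Sum.inl m) ω - f (Sum.inr m) ω) / (Nat.factorial m : ℝ)| ≤
          |∑ k ∈ Finset.Icc 1 N,
            (f (Sum.inl k) ω - f (Sum.inr k) ω) / (Nat.factorial k : ℝ)| +
          |∑ k ∈ Finset.Ioc m N,
            (f (Sum.inl k) ω - f (Sum.inr k) ω) / (Nat.factorial k : ℝ)| := by
        have heq : (f (Sum.inl m) ω - f (Sum.inr m) ω) / (Nat.factorial m : ℝ) =
            (∑ k ∈ Finset.Icc 1 N,
              (f (Sum.inl k) ω - f (Sum.inr k) ω) / (Nat.factorial k : ℝ)) -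
            ∑ k ∈ Finset.Ioc m N,
              (f (Sum.inl k) ω - f (Sum.inr k) ω) / (Nat.factorial k : ℝ) := by
          rw [hsplit, h1]; ring
        rw [heq]
        exact abs_sub _ _
      rw [hsum] at hlt
      have h2m : 2 / (Nat.factorial m : ℝ) ≥ 2 * (∑ k ∈ Finset.Ioc m N,
          1 / (Nat.factorial k : ℝ)) + 2 * R := by
        have := mul_le_mul_of_nonneg_left hle (by norm_num : (0:ℝ) ≤ 2)
        rw [mul_add] at this
        calc 2 * (∑ k ∈ Finset.Ioc m N, 1 / (Nat.factorial k : ℝ)) + 2 * R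
            ≤ 2 * (1 / (Nat.factorial m : ℝ)) := this
          _ = 2 / (Nat.factorial m : ℝ) := by rw [mul_one_div]
      rw [hdmq] at htri
      rw [htwo] at hB
      linarith
    · rintro ⟨hE, hGω⟩
      refine ⟨?_, hGω⟩
      have hEk := Set.mem_iInter₂.mp hE
      simp only [Set.mem_setOf_eq] at hEk
      have hXY : (∑ k ∈ Finset.Icc 1 N, f (Sum.inl k) ω / (Nat.factorial k : ℝ)) =
          ∑ k ∈ Finset.Icc 1 N, f (Sum.inr k) ω / (Nat.factorial k : ℝ) :=
        Finset.sum_congr rfl fun k hk => by rw [hEk k hk]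
      rw [hXY, sub_self, abs_zero]
      linarith
  calc P {ω | |(∑ k ∈ Finset.Icc 1 N, f (Sum.inl k) ω / (Nat.factorial k : ℝ)) -
            ∑ k ∈ Finset.Icc 1 N, f (Sum.inr k) ω / (Nat.factorial k : ℝ)| < 2 * R}
      = P ({ω | |(∑ k ∈ Finset.Icc 1 N, f (Sum.inl k) ω / (Nat.factorial k : ℝ)) -
            ∑ k ∈ Finset.Icc 1 N, f (Sum.inr k) ω / (Nat.factorial k : ℝ)| < 2 * R} ∩ G) :=
        (measure_inter_conull hGc).symm
    _ = P ((⋂ k ∈ Finset.Icc 1 N, {ω | f (Sum.inl k) ω = f (Sum.inr k) ω}) ∩ G) := by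
        rw [hkey]
    _ = P (⋂ k ∈ Finset.Icc 1 N, {ω | f (Sum.inl k) ω = f (Sum.inr k) ω}) :=
        measure_inter_conull hGc
    _ = (1/2 : ENNReal) ^ (Finset.Icc 1 N).card :=
        pair_meas_eq P f hmeas hindep hrad (Finset.Icc 1 N)
    _ = (1 / 2) ^ N := by rw [Nat.card_Icc]; norm_num
end
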